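/- Under the FedOMD setting, the static regret against the comparator x^* satisfies Σ_{t=1}^T (F^{(t)}(x^{(t)}) − F^{(t)}(x^*)) ≤ √T·B_φ(x^*; x^{(1)}) + (μ²/2)·√T. -/

import Mathlib

open Finset RealInnerProductSpace

section FedOMDAux

variable {E : Type*} [NormedAddCommGroup E] [InnerProductSpace ℝ E] [CompleteSpace E]

private lemma fedomd_convex_grad_le {f : E → ℝ} {g z : E} (hc : ConvexOn ℝ Set.univ f)
    (hg : HasGradientAt f g z) (u : E) : f z + ⟪g, u - z⟫ ≤ f u := by
  have hq : ConvexOn ℝ Set.univ (f ∘ (AffineMap.lineMap z u : ℝ →ᵃ[ℝ] E)) := by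
    simpa using hc.comp_affineMap (AffineMap.lineMap z u)
  have hLd : HasDerivAt (fun s : ℝ => (AffineMap.lineMap z u : ℝ →ᵃ[ℝ] E) s) (u - z) 0 := by
    simp only [AffineMap.coe_lineMap]
    simpa using ((hasDerivAt_id (0:ℝ)).smul_const (u - z)).add_const z
  have hqd : HasDerivAt (f ∘ (AffineMap.lineMap z u : ℝ →ᵃ[ℝ] E)) ⟪g, u - z⟫ 0 := by
    have h0 : (AffineMap.lineMap z u : ℝ →ᵃ[ℝ] E) 0 = z := by simp
    have := (h0 ▸ hg.hasFDerivAt :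
      HasFDerivAt f _ ((AffineMap.lineMap z u : ℝ →ᵃ[ℝ] E) 0)).comp_hasDerivAt 0 hLd
    simpa [InnerProductSpace.toDual_apply_apply] using this
  have hs := hq.le_slope_of_hasDerivAt (Set.mem_univ 0) (Set.mem_univ 1) zero_lt_one hqd
  simp only [slope_def_field, Function.comp_apply, AffineMap.lineMap_apply_one,
    AffineMap.lineMap_apply_zero] at hs
  have : ⟪g, u - z⟫ ≤ f u - f z := by
    simp [div_eq_mul_inv] at hs ⊢
    linarith [hs]
  linarith

private lemma fedomd_mirror_stationary {φ : E → ℝ} {Gφ : E → E}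
    (hφgrad : ∀ y, HasGradientAt φ (Gφ y) y) {g z w : E} {c : ℝ}
    (hmin : ∀ y, ⟪g, w⟫ + c * (φ w - φ z - ⟪Gφ z, w - z⟫) ≤
      ⟪g, y⟫ + c * (φ y - φ z - ⟪Gφ z, y - z⟫)) :
    ∀ v, ⟪g, v⟫ + c * (⟪Gφ w, v⟫ - ⟪Gφ z, v⟫) = 0 := by
  set h : E → ℝ := fun y => ⟪g, y⟫ + c * (φ y - φ z - ⟪Gφ z, y - z⟫) with hh
  have A : HasFDerivAt (fun y : E => ⟪g, y⟫) (InnerProductSpace.toDual ℝ E g : E →L[ℝ] ℝ) w := by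
    have := (InnerProductSpace.toDual ℝ E g).hasFDerivAt (x := w)
    convert this using 1
    funext y
    simp [InnerProductSpace.toDual_apply_apply]
  have C : HasFDerivAt (fun y : E => ⟪Gφ z, y - z⟫)
      (InnerProductSpace.toDual ℝ E (Gφ z) : E →L[ℝ] ℝ) w := by
    have := ((InnerProductSpace.toDual ℝ E (Gφ z)).hasFDerivAt (x := w)).sub_const ⟪Gφ z, z⟫
    have heq : (fun y : E => ⟪Gφ z, y⟫ - ⟪Gφ z, z⟫) = fun y : E => ⟪Gφ z, y - z⟫ := by
      funext y; rw [inner_sub_right]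
    simpa [heq, sub_zero] using this
  have hD : HasFDerivAt h
      ((InnerProductSpace.toDual ℝ E g : E →L[ℝ] ℝ) +
        c • ((InnerProductSpace.toDual ℝ E (Gφ w) : E →L[ℝ] ℝ) -
          (InnerProductSpace.toDual ℝ E (Gφ z) : E →L[ℝ] ℝ))) w :=
    A.add ((((hφgrad w).hasFDerivAt.sub_const (φ z)).sub C).const_mul c)
  have hlm : IsLocalMin h w := Filter.Eventually.of_forall hmin
  have hzero := hlm.hasFDerivAt_eq_zero hD
  intro v
  have := DFunLike.congr_fun hzero v
  simpa [InnerProductSpace.toDual_apply_apply] using this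

private lemma fedomd_sum_equivFin {α : Type*} {M : Type*} [AddCommMonoid M]
    (s : Finset α) (f : α → M) :
    ∑ i : Fin s.card, f (s.equivFin.symm i) = ∑ n ∈ s, f n := by
  rw [← Finset.sum_coe_sort s f, ← Equiv.sum_comp s.equivFin.symm (fun j : s => f j)]

private lemma fedomd_telescope (q : ℕ → ℝ) : ∀ m : ℕ,
    ∑ t ∈ Finset.Icc 1 m, (q t - q (t+1)) = q 1 - q (m+1) := by
  intro m
  induction m with
  | zero => simp
  | succ k ih =>
    rw [Finset.sum_Icc_succ_top (by omega : 1 ≤ k + 1), ih]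
    ring

end FedOMDAux

theorem fedomd_static_regret
    {d : ℕ} {ι : Type*} (N : Finset ι) (T : ℕ) (hT : 1 ≤ T) (μ : ℝ) (hμ : 0 ≤ μ)
    (F : ℕ → ι → EuclideanSpace ℝ (Fin d) → ℝ)
    (G : ℕ → ι → EuclideanSpace ℝ (Fin d) → EuclideanSpace ℝ (Fin d))
    (p : ℕ → ι → ℝ)
    (Fg : ℕ → EuclideanSpace ℝ (Fin d) → ℝ)
    (φ : EuclideanSpace ℝ (Fin d) → ℝ)
    (Gφ : EuclideanSpace ℝ (Fin d) → EuclideanSpace ℝ (Fin d))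
    (B : EuclideanSpace ℝ (Fin d) → EuclideanSpace ℝ (Fin d) → ℝ)
    (x : ℕ → EuclideanSpace ℝ (Fin d))
    (xloc : ℕ → ι → EuclideanSpace ℝ (Fin d))
    (xs : EuclideanSpace ℝ (Fin d))
    (hconv : ∀ t ∈ Icc 1 T, ∀ n ∈ N, ConvexOn ℝ Set.univ (F t n))
    (hgrad : ∀ t ∈ Icc 1 T, ∀ n ∈ N, ∀ y, HasGradientAt (F t n) (G t n y) y)
    (hgradbd : ∀ t ∈ Icc 1 T, ∀ n ∈ N, ∀ y, ‖G t n y‖ ≤ μ)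
    (hp0 : ∀ t ∈ Icc 1 T, ∀ n ∈ N, 0 ≤ p t n)
    (hp1 : ∀ t ∈ Icc 1 T, ∀ n ∈ N, p t n ≤ 1)
    (hpsum : ∀ t ∈ Icc 1 T, ∑ n ∈ N, p t n = 1)
    (hFg : ∀ t ∈ Icc 1 T, ∀ y, Fg t y = ∑ n ∈ N, p t n * F t n y)
    (hφgrad : ∀ y, HasGradientAt φ (Gφ y) y)
    (hφsc : ∀ y z : EuclideanSpace ℝ (Fin d),
      φ z + ⟪Gφ z, y - z⟫ + (1 / 2) * ‖y - z‖ ^ 2 ≤ φ y)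
    (hB : ∀ y z : EuclideanSpace ℝ (Fin d), B y z = φ y - φ z - ⟪Gφ z, y - z⟫)
    (hBjensen : ∀ (j : ℕ) (z : Fin j → EuclideanSpace ℝ (Fin d)) (w : Fin j → ℝ),
      (∀ i, 0 ≤ w i) → (∀ i, w i ≤ 1) → ∑ i, w i = 1 →
      ∀ u, B u (∑ i, w i • z i) ≤ ∑ i, w i * B u (z i))
    (hlocmin : ∀ t ∈ Icc 1 T, ∀ n ∈ N, ∀ y,
      ⟪G t n (x t), xloc (t + 1) n⟫ + Real.sqrt T * B (xloc (t + 1) n) (x t) ≤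
        ⟪G t n (x t), y⟫ + Real.sqrt T * B y (x t))
    (hagg : ∀ t ∈ Icc 1 T, x (t + 1) = ∑ n ∈ N, p t n • xloc (t + 1) n)
    (hxs : ∀ y, ∑ t ∈ Icc 1 T, Fg t xs ≤ ∑ t ∈ Icc 1 T, Fg t y) :
    ∑ t ∈ Icc 1 T, (Fg t (x t) - Fg t xs) ≤
      Real.sqrt T * B xs (x 1) + μ ^ 2 / 2 * Real.sqrt T := by
  set c : ℝ := Real.sqrt T with hcdef
  have hTpos : (0:ℝ) < T := by exact_mod_cast hT
  have hc : 0 < c := Real.sqrt_pos.2 hTpos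
  have hcc : c * c = (T:ℝ) := Real.mul_self_sqrt hTpos.le
  -- Bregman divergence lower bound and nonnegativity
  have Bge : ∀ y z : EuclideanSpace ℝ (Fin d), (1/2) * ‖y - z‖^2 ≤ B y z := by
    intro y z
    have := hφsc y z
    rw [hB]
    linarith
  have Bnn : ∀ y z : EuclideanSpace ℝ (Fin d), 0 ≤ B y z := by
    intro y z
    have := Bge y z
    nlinarith [sq_nonneg ‖y - z‖]
  -- key per-client inequality
  have key : ∀ t ∈ Icc 1 T, ∀ n ∈ N,
      F t n (x t) - F t n xs ≤ μ^2 / (2*c) + c * (B xs (x t) - B xs (xloc (t+1) n)) := by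
    intro t ht n hn
    set g := G t n (x t) with hg
    set z := x t with hz
    set w := xloc (t+1) n with hw
    have hmin : ∀ y, ⟪g, w⟫ + c * (φ w - φ z - ⟪Gφ z, w - z⟫) ≤
        ⟪g, y⟫ + c * (φ y - φ z - ⟪Gφ z, y - z⟫) := by
      intro y
      have := hlocmin t ht n hn y
      rwa [hB w z, hB y z] at this
    have hstat := fedomd_mirror_stationary hφgrad hmin
    have h1 : F t n z + ⟪g, xs - z⟫ ≤ F t n xs :=
      fedomd_convex_grad_le (hconv t ht n hn) (hgrad t ht n hn z) xs
    have h2 : ⟪g, z - xs⟫ = ⟪g, z - w⟫ + ⟪g, w - xs⟫ := by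
      rw [← inner_add_right]
      congr 1
      abel
    have h2' : ⟪g, z - xs⟫ = -⟪g, xs - z⟫ := by
      rw [← inner_neg_right]
      congr 1
      abel
    have h3 : ⟪g, z - w⟫ ≤ μ * ‖w - z‖ := by
      calc ⟪g, z - w⟫ ≤ ‖g‖ * ‖z - w‖ := real_inner_le_norm g (z - w)
        _ ≤ μ * ‖z - w‖ := by
            have := hgradbd t ht n hn (x t)
            exact mul_le_mul_of_nonneg_right this (norm_nonneg _)
        _ = μ * ‖w - z‖ := by rw [norm_sub_rev]
    have h4 : ⟪g, w - xs⟫ = c * (B xs z - B xs w - B w z) := by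
      have hs := hstat (w - xs)
      simp only [hB, inner_sub_right] at hs ⊢
      linarith
    have h5 : (1/2) * ‖w - z‖^2 ≤ B w z := Bge w z
    have h6 : μ * ‖w - z‖ - c * ((1/2) * ‖w - z‖^2) ≤ μ^2 / (2*c) := by
      rw [le_div_iff₀ (by positivity)]
      nlinarith [sq_nonneg (μ - c * ‖w - z‖), norm_nonneg (w - z)]
    have h7 : c * ((1/2) * ‖w - z‖^2) ≤ c * B w z := mul_le_mul_of_nonneg_left h5 hc.le
    have := h1
    nlinarith [h1, h2, h2', h3, h4, h6, h7]
  -- per-round inequality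
  have round : ∀ t ∈ Icc 1 T,
      Fg t (x t) - Fg t xs ≤ μ^2 / (2*c) + c * (B xs (x t) - B xs (x (t+1))) := by
    intro t ht
    have jensen : B xs (x (t+1)) ≤ ∑ n ∈ N, p t n * B xs (xloc (t+1) n) := by
      have hws : ∑ i : Fin N.card, p t (N.equivFin.symm i) = 1 := by
        rw [fedomd_sum_equivFin N (p t)]
        exact hpsum t ht
      have hj := hBjensen N.card (fun i => xloc (t+1) (N.equivFin.symm i))
        (fun i => p t (N.equivFin.symm i))
        (fun i => hp0 t ht _ (N.equivFin.symm i).2)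
        (fun i => hp1 t ht _ (N.equivFin.symm i).2) hws xs
      rw [fedomd_sum_equivFin N (fun n => p t n • xloc (t+1) n)] at hj
      rw [fedomd_sum_equivFin N (fun n => p t n * B xs (xloc (t+1) n))] at hj
      rwa [← hagg t ht] at hj
    have step1 : Fg t (x t) - Fg t xs = ∑ n ∈ N, p t n * (F t n (x t) - F t n xs) := by
      rw [hFg t ht, hFg t ht, ← Finset.sum_sub_distrib]
      exact Finset.sum_congr rfl fun n _ => by ring
    have step2 : ∑ n ∈ N, p t n * (F t n (x t) - F t n xs) ≤
        ∑ n ∈ N, p t n * (μ^2 / (2*c) + c * (B xs (x t) - B xs (xloc (t+1) n))) :=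
      Finset.sum_le_sum fun n hn =>
        mul_le_mul_of_nonneg_left (key t ht n hn) (hp0 t ht n hn)
    have step3 : ∑ n ∈ N, p t n * (μ^2 / (2*c) + c * (B xs (x t) - B xs (xloc (t+1) n))) =
        (μ^2 / (2*c) + c * B xs (x t)) - c * ∑ n ∈ N, p t n * B xs (xloc (t+1) n) := by
      have : ∀ n ∈ N, p t n * (μ^2 / (2*c) + c * (B xs (x t) - B xs (xloc (t+1) n))) =
          (μ^2 / (2*c) + c * B xs (x t)) * p t n - c * (p t n * B xs (xloc (t+1) n)) :=
        fun n _ => by ring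
      rw [Finset.sum_congr rfl this, Finset.sum_sub_distrib, ← Finset.mul_sum,
        ← Finset.mul_sum, hpsum t ht, mul_one]
    have hcj : c * B xs (x (t+1)) ≤ c * ∑ n ∈ N, p t n * B xs (xloc (t+1) n) :=
      mul_le_mul_of_nonneg_left jensen hc.le
    linarith [step2, step3.le, step3.ge]
  -- telescoping sum
  have tele : ∑ t ∈ Icc 1 T, (B xs (x t) - B xs (x (t+1))) =
      B xs (x 1) - B xs (x (T+1)) := fedomd_telescope (fun t => B xs (x t)) T
  calc ∑ t ∈ Icc 1 T, (Fg t (x t) - Fg t xs)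
      ≤ ∑ t ∈ Icc 1 T, (μ^2 / (2*c) + c * (B xs (x t) - B xs (x (t+1)))) :=
        Finset.sum_le_sum round
    _ = T * (μ^2 / (2*c)) + c * (B xs (x 1) - B xs (x (T+1))) := by
        rw [Finset.sum_add_distrib, ← Finset.mul_sum, tele, Finset.sum_const,
          Nat.card_Icc, Nat.add_sub_cancel, nsmul_eq_mul]
    _ ≤ c * B xs (x 1) + μ^2 / 2 * c := by
        have hT1 : (T:ℝ) * (μ^2 / (2*c)) = μ^2 / 2 * c := by
          rw [← hcc]
          field_simp
        have hBnn := Bnn xs (x (T+1))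
        nlinarith [mul_le_mul_of_nonneg_left hBnn hc.le]
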